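/- Let (X,μ) be a non-atomic probability measure space, T a tree on X, M_T the associated maximal operator, p > 1 and F > 0. If φ : X → [0,∞) is measurable with |||φ|||_{p,∞} ≤ F, then for every λ > 0, μ({x ∈ X : M_T φ(x) ≥ λ}) ≤ F^p/λ^p. -/

import Mathlib

open MeasureTheory Set Filter ENNReal

/-- A measure is non-atomic if every measurable set of positive measure contains a
measurable subset of strictly smaller positive measure. -/
def Nonatomic {X : Type*} [MeasurableSpace X] (μ : Measure X) : Prop :=
  ∀ A : Set X, MeasurableSet A → 0 < μ A →
    ∃ B, B ⊆ A ∧ MeasurableSet B ∧ 0 < μ B ∧ μ B < μ A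

/-- A tree on a probability measure space, in the sense of Melas. -/
structure TreeOn (X : Type*) [MeasurableSpace X] (μ : MeasureTheory.Measure X) where
  carrier : Set (Set X)
  child : Set X → Set (Set X)
  level : ℕ → Set (Set X)
  univ_mem : Set.univ ∈ carrier
  meas : ∀ I ∈ carrier, MeasurableSet I
  pos : ∀ I ∈ carrier, 0 < μ I
  child_subset_carrier : ∀ I ∈ carrier, child I ⊆ carrier
  child_finite : ∀ I ∈ carrier, (child I).Finite
  child_two : ∀ I ∈ carrier, ∃ J ∈ child I, ∃ K ∈ child I, J ≠ K
  child_sub : ∀ I ∈ carrier, ∀ J ∈ child I, J ⊆ I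
  child_almost_disjoint : ∀ I ∈ carrier, ∀ J ∈ child I, ∀ K ∈ child I, J ≠ K → μ (J ∩ K) = 0
  child_union : ∀ I ∈ carrier, ⋃₀ child I = I
  level_zero : level 0 = {Set.univ}
  level_succ : ∀ m, level (m + 1) = ⋃ I ∈ level m, child I
  carrier_eq : carrier = ⋃ m, level m
  level_tendsto : Filter.Tendsto (fun m => ⨆ I ∈ level m, μ I) Filter.atTop (nhds 0)

/-- The maximal operator associated to a tree `T`:
`M_T φ (x) = sup { (1/μ I) ∫_I |φ| dμ : x ∈ I, I ∈ T }`. -/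
noncomputable def maxT {X : Type*} [MeasurableSpace X] (μ : MeasureTheory.Measure X)
    (T : TreeOn X μ) (φ : X → ℝ) (x : X) : ℝ≥0∞ :=
  ⨆ (I : Set X) (_ : I ∈ T.carrier) (_ : x ∈ I),
    (∫⁻ y in I, ENNReal.ofReal |φ y| ∂μ) / μ I

/-- The norm `|||φ|||_{p,∞} = sup { μ(E)^{-1+1/p} ∫_E |φ| dμ : E measurable, μ E > 0 }`. -/
noncomputable def tripleNorm {X : Type*} [MeasurableSpace X] (μ : MeasureTheory.Measure X)
    (p : ℝ) (φ : X → ℝ) : ℝ≥0∞ :=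
  ⨆ (E : Set X) (_ : MeasurableSet E) (_ : 0 < μ E),
    μ E ^ (-1 + 1/p) * ∫⁻ x in E, ENNReal.ofReal |φ x| ∂μ

/-- The standard quasi-norm `‖φ‖_{p,∞} = sup { λ · μ({|φ| > λ})^{1/p} : λ > 0 }`. -/
noncomputable def weakNorm {X : Type*} [MeasurableSpace X] (μ : MeasureTheory.Measure X)
    (p : ℝ) (φ : X → ℝ) : ℝ≥0∞ :=
  ⨆ (l : ℝ) (_ : 0 < l), ENNReal.ofReal l * μ {x | l < |φ x|} ^ (1/p)

/-- The standard quasi-norm for an `ℝ≥0∞`-valued function (such as `maxT μ T φ`). -/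
noncomputable def weakNormE {X : Type*} [MeasurableSpace X] (μ : MeasureTheory.Measure X)
    (p : ℝ) (g : X → ℝ≥0∞) : ℝ≥0∞ :=
  ⨆ (l : ℝ) (_ : 0 < l), ENNReal.ofReal l * μ {x | ENNReal.ofReal l < g x} ^ (1/p)


section Aux
variable {X : Type*} [MeasurableSpace X] {μ : Measure X}

lemma TreeOn.level_subset_carrier (T : TreeOn X μ) : ∀ m, T.level m ⊆ T.carrier := by
  intro m
  induction m with
  | zero => rw [T.level_zero]; simpa using T.univ_mem
  | succ m ih =>
    rw [T.level_succ]
    rintro J hJ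
    simp only [Set.mem_iUnion] at hJ
    obtain ⟨I, hI, hJI⟩ := hJ
    exact T.child_subset_carrier I (ih hI) hJI

lemma TreeOn.level_finite (T : TreeOn X μ) : ∀ m, (T.level m).Finite := by
  intro m
  induction m with
  | zero => rw [T.level_zero]; exact Set.finite_singleton _
  | succ m ih =>
    rw [T.level_succ]
    exact ih.biUnion fun I hI => T.child_finite I (T.level_subset_carrier m hI)

lemma TreeOn.exists_ancestor (T : TreeOn X μ) :
    ∀ n m, m ≤ n → ∀ J ∈ T.level n, ∃ I ∈ T.level m, J ⊆ I := by
  intro n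
  induction n with
  | zero => intro m hm J hJ; exact ⟨J, Nat.le_zero.mp hm ▸ hJ, subset_rfl⟩
  | succ n ih =>
    intro m hm J hJ
    rcases Nat.lt_or_ge m (n+1) with h | h
    · rw [T.level_succ] at hJ
      simp only [Set.mem_iUnion] at hJ
      obtain ⟨K, hK, hJK⟩ := hJ
      obtain ⟨I, hI, hKI⟩ := ih m (Nat.lt_succ_iff.mp h) K hK
      exact ⟨I, hI, (T.child_sub K (T.level_subset_carrier n hK) J hJK).trans hKI⟩
    · have : m = n + 1 := le_antisymm hm h
      exact ⟨J, this ▸ hJ, subset_rfl⟩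

lemma TreeOn.level_aedisjoint (T : TreeOn X μ) :
    ∀ m, ∀ I ∈ T.level m, ∀ J ∈ T.level m, I ≠ J → μ (I ∩ J) = 0 := by
  intro m
  induction m with
  | zero =>
    intro I hI J hJ hne
    rw [T.level_zero] at hI hJ
    exact absurd (hI.trans hJ.symm) hne
  | succ m ih =>
    intro I hI J hJ hne
    rw [T.level_succ] at hI hJ
    simp only [Set.mem_iUnion] at hI hJ
    obtain ⟨A, hA, hIA⟩ := hI
    obtain ⟨B, hB, hJB⟩ := hJ
    by_cases hAB : A = B
    · subst hAB
      exact T.child_almost_disjoint A (T.level_subset_carrier m hA) I hIA J hJB hne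
    · have h0 : μ (A ∩ B) = 0 := ih A hA B hB hAB
      refine measure_mono_null ?_ h0
      exact Set.inter_subset_inter
        (T.child_sub A (T.level_subset_carrier m hA) I hIA)
        (T.child_sub B (T.level_subset_carrier m hB) J hJB)

lemma TreeOn.comparable_aux (T : TreeOn X μ) {m n : ℕ} (hmn : m ≤ n)
    {I J : Set X} (hI : I ∈ T.level m) (hJ : J ∈ T.level n) :
    J ⊆ I ∨ μ (I ∩ J) = 0 := by
  obtain ⟨A, hA, hJA⟩ := T.exists_ancestor n m hmn J hJ
  by_cases hAI : A = I
  · exact Or.inl (hAI ▸ hJA)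
  · refine Or.inr (measure_mono_null ?_ (T.level_aedisjoint m I hI A hA (Ne.symm hAI)))
    exact Set.inter_subset_inter subset_rfl hJA

lemma TreeOn.comparable (T : TreeOn X μ) {I J : Set X}
    (hI : I ∈ T.carrier) (hJ : J ∈ T.carrier) :
    I ⊆ J ∨ J ⊆ I ∨ μ (I ∩ J) = 0 := by
  rw [T.carrier_eq] at hI hJ
  obtain ⟨m, hm⟩ := Set.mem_iUnion.mp hI
  obtain ⟨n, hn⟩ := Set.mem_iUnion.mp hJ
  rcases le_total m n with h | h
  · rcases T.comparable_aux h hm hn with h' | h'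
    · exact Or.inr (Or.inl h')
    · exact Or.inr (Or.inr h')
  · rcases T.comparable_aux h hn hm with h' | h'
    · exact Or.inl h'
    · exact Or.inr (Or.inr (by rwa [Set.inter_comm]))

lemma TreeOn.supersets_finite (T : TreeOn X μ) {I : Set X} (hI : 0 < μ I) :
    {J | J ∈ T.carrier ∧ I ⊆ J}.Finite := by
  have h := T.level_tendsto.eventually (gt_mem_nhds hI)
  obtain ⟨N, hN⟩ := Filter.eventually_atTop.mp h
  refine Set.Finite.subset ((Set.finite_Iic N).biUnion fun n _ => T.level_finite n) ?_
  rintro J ⟨hJc, hIJ⟩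
  rw [T.carrier_eq] at hJc
  obtain ⟨n, hn⟩ := Set.mem_iUnion.mp hJc
  refine Set.mem_biUnion (show n ∈ Set.Iic N from ?_) hn
  by_contra h'
  have h1 : μ J ≤ ⨆ K ∈ T.level n, μ K := le_biSup _ hn
  have h2 := hN n (le_of_not_ge (by simpa using h'))
  exact absurd ((measure_mono hIJ).trans h1) (not_le.mpr h2)

lemma TreeOn.carrier_countable (T : TreeOn X μ) : T.carrier.Countable := by
  rw [T.carrier_eq]
  exact Set.countable_iUnion fun m => (T.level_finite m).countable

end Aux

/-- Upper bound in Theorem 3.1: if `|||φ|||_{p,∞} ≤ F` then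
`μ({M_T φ ≥ λ}) ≤ F^p/λ^p` for every `λ > 0`. -/
theorem stmt8 {X : Type*} [MeasurableSpace X] (μ : MeasureTheory.Measure X)
    [IsProbabilityMeasure μ] (hna : Nonatomic μ) (T : TreeOn X μ)
    (p : ℝ) (hp : 1 < p) (F : ℝ) (hF : 0 < F)
    (φ : X → ℝ) (hφm : Measurable φ) (hφ0 : ∀ x, 0 ≤ φ x)
    (hnorm : tripleNorm μ p φ ≤ ENNReal.ofReal F)
    (l : ℝ) (hl : 0 < l) :
    μ {x | ENNReal.ofReal l ≤ maxT μ T φ x} ≤ ENNReal.ofReal (F ^ p / l ^ p) := by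
  have hp0 : (0:ℝ) < p := lt_trans one_pos hp
  set f : X → ℝ≥0∞ := fun y => ENNReal.ofReal |φ y| with hf
  have hfm : Measurable f := hφm.abs.ennreal_ofReal
  set E := {x | ENNReal.ofReal l ≤ maxT μ T φ x} with hE
  have hEne : μ E ≠ ⊤ := measure_ne_top μ E
  -- key estimate for every 0 < l' < l
  have key : ∀ l' : ℝ, 0 < l' → l' < l → μ E ≤ ENNReal.ofReal (F ^ p / l' ^ p) := by
    intro l' hl'0 hl'l
    set G : Set (Set X) := {I | I ∈ T.carrier ∧ ENNReal.ofReal l' * μ I < ∫⁻ y in I, f y ∂μ}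
      with hG
    set M : Set (Set X) := {J | J ∈ G ∧ ∀ K ∈ G, J ⊆ K → K = J} with hM
    have hMsubG : M ⊆ G := fun J hJ => hJ.1
    have hGsubC : G ⊆ T.carrier := fun I hI => hI.1
    -- every element of G has a maximal superset in M
    have hmax : ∀ I ∈ G, ∃ J ∈ M, I ⊆ J := by
      intro I hI
      have hfin : {J | J ∈ G ∧ I ⊆ J}.Finite :=
        (T.supersets_finite (T.pos I hI.1)).subset (fun J hJ => ⟨hJ.1.1, hJ.2⟩)
      obtain ⟨J, hJm⟩ := hfin.exists_maximal ⟨I, hI, subset_rfl⟩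
      have hJ : J ∈ {J | J ∈ G ∧ I ⊆ J} := hJm.prop
      have hJmax : ∀ K ∈ {J | J ∈ G ∧ I ⊆ J}, J ⊆ K → J = K :=
        fun K hK hJK => hJm.eq_of_le hK hJK
      refine ⟨J, ⟨hJ.1, ?_⟩, hJ.2⟩
      intro K hK hJK
      exact (hJmax K ⟨hK, hJ.2.trans hJK⟩ hJK).symm
    set U : Set X := ⋃₀ M with hU
    -- E ⊆ U
    have hEU : E ⊆ U := by
      intro x hx
      have hx' : ENNReal.ofReal l' < maxT μ T φ x :=
        lt_of_lt_of_le ((ENNReal.ofReal_lt_ofReal_iff hl).mpr hl'l) hx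
      rw [maxT, lt_iSup_iff] at hx'
      obtain ⟨I, hx'⟩ := hx'
      rw [lt_iSup_iff] at hx'
      obtain ⟨hIc, hx'⟩ := hx'
      rw [lt_iSup_iff] at hx'
      obtain ⟨hxI, hx'⟩ := hx'
      have hIne : μ I ≠ 0 := (T.pos I hIc).ne'
      have hIG : I ∈ G := by
        refine ⟨hIc, ?_⟩
        exact (ENNReal.lt_div_iff_mul_lt (Or.inl hIne) (Or.inl (measure_ne_top μ I))).mp hx'
      obtain ⟨J, hJM, hIJ⟩ := hmax I hIG
      exact ⟨J, hJM, hIJ hxI⟩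
    have hMc : M.Countable := T.carrier_countable.mono (hMsubG.trans hGsubC)
    have hMmeas : ∀ J ∈ M, MeasurableSet J := fun J hJ => T.meas J (hGsubC (hMsubG hJ))
    have hUmeas : MeasurableSet U := MeasurableSet.sUnion hMc hMmeas
    -- pairwise a.e. disjoint
    have hMdisj : M.Pairwise (AEDisjoint μ) := by
      intro J hJ K hK hne
      rcases T.comparable (hGsubC (hMsubG hJ)) (hGsubC (hMsubG hK)) with h | h | h
      · exact absurd (hJ.2 K hK.1 h) (Ne.symm hne)
      · exact absurd (hK.2 J hJ.1 h) hne
      · exact h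
    by_cases hU0 : μ U = 0
    · rw [show μ E = 0 from measure_mono_null hEU hU0]
      exact zero_le
    have hU0' : 0 < μ U := pos_iff_ne_zero.mpr hU0
    haveI : Countable ↥M := hMc.to_subtype
    have hUi : U = ⋃ (i : M), (i : Set X) := Set.sUnion_eq_iUnion
    -- integral over U equals sum
    have hint : ∫⁻ y in U, f y ∂μ = ∑' (i : M), ∫⁻ y in (i : Set X), f y ∂μ := by
      rw [hUi]
      exact lintegral_iUnion₀ (s := fun i : M => (i : Set X))
        (fun i => (hMmeas i i.2).nullMeasurableSet)
        (fun i j hij => hMdisj i.2 j.2 (fun h => hij (Subtype.ext h))) f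
    -- lower bound for the integral
    have hlow : ENNReal.ofReal l' * μ U ≤ ∫⁻ y in U, f y ∂μ := by
      calc ENNReal.ofReal l' * μ U ≤ ENNReal.ofReal l' * ∑' (i : M), μ (i : Set X) := by
            refine mul_le_mul_right ?_ _
            rw [hUi]; exact measure_iUnion_le _
        _ = ∑' (i : M), ENNReal.ofReal l' * μ (i : Set X) := ENNReal.tsum_mul_left.symm
        _ ≤ ∑' (i : M), ∫⁻ y in (i : Set X), f y ∂μ :=
            ENNReal.tsum_le_tsum fun i => (hMsubG i.2).2.le
        _ = ∫⁻ y in U, f y ∂μ := hint.symm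
    -- use the triple norm hypothesis at U
    have htri : μ U ^ (-1 + 1/p) * ∫⁻ y in U, f y ∂μ ≤ ENNReal.ofReal F := by
      refine le_trans ?_ hnorm
      rw [tripleNorm]
      refine le_iSup_of_le U ?_
      refine le_iSup_of_le hUmeas ?_
      exact le_iSup_of_le hU0' le_rfl
    have hUnt : μ U ≠ ⊤ := measure_ne_top μ U
    have hpow : μ U ^ (-1 + 1/p) * (ENNReal.ofReal l' * μ U)
        = ENNReal.ofReal l' * μ U ^ (1/p) := by
      have hh : μ U ^ (-1 + 1/p) * μ U = μ U ^ (1/p) := by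
        calc μ U ^ (-1 + 1/p) * μ U = μ U ^ (-1 + 1/p) * μ U ^ (1:ℝ) := by
              rw [ENNReal.rpow_one]
          _ = μ U ^ (-1 + 1/p + 1) := (ENNReal.rpow_add _ _ hU0 hUnt).symm
          _ = μ U ^ (1/p) := by ring_nf
      calc μ U ^ (-1 + 1/p) * (ENNReal.ofReal l' * μ U)
          = ENNReal.ofReal l' * (μ U ^ (-1 + 1/p) * μ U) := by ring
        _ = ENNReal.ofReal l' * μ U ^ (1/p) := by rw [hh]
    have hmain : ENNReal.ofReal l' * μ U ^ (1/p) ≤ ENNReal.ofReal F := by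
      rw [← hpow]
      exact le_trans (mul_le_mul_right hlow _) htri
    have hl'ne : ENNReal.ofReal l' ≠ 0 := by
      simp [ENNReal.ofReal_eq_zero, not_le, hl'0]
    have hdiv : μ U ^ (1/p) ≤ ENNReal.ofReal F / ENNReal.ofReal l' := by
      rw [ENNReal.le_div_iff_mul_le (Or.inl hl'ne) (Or.inl ENNReal.ofReal_ne_top)]
      rwa [mul_comm]
    have hUF : μ U ≤ ENNReal.ofReal (F ^ p / l' ^ p) := by
      have h1 : (μ U ^ (1/p)) ^ p ≤ (ENNReal.ofReal F / ENNReal.ofReal l') ^ p :=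
        ENNReal.rpow_le_rpow hdiv hp0.le
      rw [← ENNReal.rpow_mul, one_div, inv_mul_cancel₀ hp0.ne', ENNReal.rpow_one] at h1
      rwa [← ENNReal.ofReal_div_of_pos hl'0,
        ENNReal.ofReal_rpow_of_nonneg (by positivity) hp0.le,
        Real.div_rpow hF.le hl'0.le] at h1
    exact le_trans (measure_mono hEU) hUF
  -- pass to the limit l' → l
  rw [ENNReal.le_ofReal_iff_toReal_le hEne (by positivity)]
  have hcont : Filter.Tendsto (fun l' : ℝ => F ^ p / l' ^ p) (nhdsWithin l (Set.Iio l))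
      (nhds (F ^ p / l ^ p)) := by
    have h1 : ContinuousAt (fun l' : ℝ => F ^ p / l' ^ p) l :=
      continuousAt_const.div (Real.continuousAt_rpow_const l p (Or.inl hl.ne'))
        (Real.rpow_pos_of_pos hl p).ne'
    exact h1.continuousWithinAt
  refine ge_of_tendsto hcont ?_
  have hmem : Set.Ioo 0 l ∈ nhdsWithin l (Set.Iio l) := by
    refine mem_nhdsWithin.mpr ⟨Set.Ioi 0, isOpen_Ioi, hl, ?_⟩
    rintro x ⟨hx1, hx2⟩
    exact ⟨hx1, hx2⟩
  filter_upwards [hmem] with l' hl'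
  exact ENNReal.toReal_le_of_le_ofReal
    (div_nonneg (Real.rpow_nonneg hF.le p) (Real.rpow_nonneg hl'.1.le p)) (key l' hl'.1 hl'.2)
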